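/- The presented group G = ⟨g₀, g₁, g₂ | g₀⁴ = g₁²g₂², g₁⁴ = g₂²g₀², g₂⁴ = g₀²g₁², g₂²g₁²g₀² = 1, g₀³g₁³g₂³ = 1⟩ is finite of order 108. -/

import Mathlib

/-- The five relators of the group
`G = ⟨g₀, g₁, g₂ | g₀⁴ = g₁²g₂², g₁⁴ = g₂²g₀², g₂⁴ = g₀²g₁², g₂²g₁²g₀² = 1, g₀³g₁³g₂³ = 1⟩`
as elements of the free group on three generators. -/
def GRels : Set (FreeGroup (Fin 3)) :=
  { FreeGroup.of 0 ^ 4 * (FreeGroup.of 1 ^ 2 * FreeGroup.of 2 ^ 2)⁻¹,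
    FreeGroup.of 1 ^ 4 * (FreeGroup.of 2 ^ 2 * FreeGroup.of 0 ^ 2)⁻¹,
    FreeGroup.of 2 ^ 4 * (FreeGroup.of 0 ^ 2 * FreeGroup.of 1 ^ 2)⁻¹,
    FreeGroup.of 2 ^ 2 * FreeGroup.of 1 ^ 2 * FreeGroup.of 0 ^ 2,
    FreeGroup.of 0 ^ 3 * FreeGroup.of 1 ^ 3 * FreeGroup.of 2 ^ 3 }

namespace G108
abbrev x0 : FreeGroup (Fin 3) := FreeGroup.of 0
abbrev x1 : FreeGroup (Fin 3) := FreeGroup.of 1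
abbrev x2 : FreeGroup (Fin 3) := FreeGroup.of 2
def r1 : FreeGroup (Fin 3) := FreeGroup.of 0 ^ 4 * (FreeGroup.of 1 ^ 2 * FreeGroup.of 2 ^ 2)⁻¹
def r2 : FreeGroup (Fin 3) := FreeGroup.of 1 ^ 4 * (FreeGroup.of 2 ^ 2 * FreeGroup.of 0 ^ 2)⁻¹
def r3 : FreeGroup (Fin 3) := FreeGroup.of 2 ^ 4 * (FreeGroup.of 0 ^ 2 * FreeGroup.of 1 ^ 2)⁻¹
def r4 : FreeGroup (Fin 3) := FreeGroup.of 2 ^ 2 * FreeGroup.of 1 ^ 2 * FreeGroup.of 0 ^ 2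
def r5 : FreeGroup (Fin 3) := FreeGroup.of 0 ^ 3 * FreeGroup.of 1 ^ 3 * FreeGroup.of 2 ^ 3

abbrev N : Subgroup (FreeGroup (Fin 3)) := Subgroup.normalClosure GRels
theorem nN : N.Normal := Subgroup.normalClosure_normal
theorem m1 : r1 ∈ N := Subgroup.subset_normalClosure (Set.mem_insert _ _)
theorem m2 : r2 ∈ N := Subgroup.subset_normalClosure (Set.mem_insert_of_mem _ (Set.mem_insert _ _))
theorem m3 : r3 ∈ N := Subgroup.subset_normalClosure (Set.mem_insert_of_mem _ (Set.mem_insert_of_mem _ (Set.mem_insert _ _)))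
theorem m4 : r4 ∈ N := Subgroup.subset_normalClosure (Set.mem_insert_of_mem _ (Set.mem_insert_of_mem _ (Set.mem_insert_of_mem _ (Set.mem_insert _ _))))
theorem m5 : r5 ∈ N := Subgroup.subset_normalClosure (Set.mem_insert_of_mem _ (Set.mem_insert_of_mem _ (Set.mem_insert_of_mem _ (Set.mem_insert_of_mem _ rfl))))
def wI2 : FreeGroup (Fin 3) := x1 * x1 * x0 * x0 * x1⁻¹ * x1⁻¹ * x0 * x0 * x0 * x0

theorem mI2 : wI2 ∈ N := by
  have h : wI2 = (x1 * x1 * x0 * x0 * x1⁻¹ * x1⁻¹) * (r1) * (x1 * x1 * x0 * x0 * x1⁻¹ * x1⁻¹)⁻¹ * ((x1 * x1 * x0 * x0) * (r4) * (x1 * x1 * x0 * x0)⁻¹) := by decide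
  rw [h]
  exact mul_mem (nN.conj_mem _ m1 _) (nN.conj_mem _ m4 _)

def wI3 : FreeGroup (Fin 3) := x0⁻¹ * x0⁻¹ * x1 * x1 * x0 * x0 * x1 * x1 * x1 * x1

theorem mI3 : wI3 ∈ N := by
  have h : wI3 = (x0⁻¹ * x0⁻¹ * x1 * x1 * x0 * x0) * (r4) * (x0⁻¹ * x0⁻¹ * x1 * x1 * x0 * x0)⁻¹ * ((x0⁻¹ * x0⁻¹ * x2⁻¹ * x2⁻¹) * (r2) * (x0⁻¹ * x0⁻¹ * x2⁻¹ * x2⁻¹)⁻¹) := by decide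
  rw [h]
  exact mul_mem (nN.conj_mem _ m4 _) (nN.conj_mem _ m2 _)

def wW4 : FreeGroup (Fin 3) := x1 * x1 * x1 * x1 * x1 * x1 * x0⁻¹ * x0⁻¹ * x0⁻¹ * x0⁻¹ * x0⁻¹ * x0⁻¹

theorem mW4 : wW4 ∈ N := by
  have h : wW4 = (x1 * x1) * (r2) * (x1 * x1)⁻¹ * (((1 : FreeGroup (Fin 3))) * (r1)⁻¹ * ((1 : FreeGroup (Fin 3)))⁻¹) := by decide
  rw [h]
  exact mul_mem (nN.conj_mem _ m2 _) (nN.conj_mem _ (inv_mem m1) _)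

def wW3 : FreeGroup (Fin 3) := x0 * x0 * x0 * x0 * x0 * x0 * x0 * x0 * x0 * x0 * x0 * x0 * x0 * x0 * x0 * x0 * x0 * x0

theorem mW3 : wW3 ∈ N := by
  have h : wW3 = (x0 * x0 * x0 * x0 * x0 * x0 * x0 * x0 * x0 * x0 * x0 * x0 * x0 * x0) * (r1) * (x0 * x0 * x0 * x0 * x0 * x0 * x0 * x0 * x0 * x0 * x0 * x0 * x0 * x0)⁻¹ * ((x0 * x0 * x0 * x0 * x0 * x0 * x0 * x0 * x0 * x0 * x0 * x0 * x0 * x0) * (wI2) * (x0 * x0 * x0 * x0 * x0 * x0 * x0 * x0 * x0 * x0 * x0 * x0 * x0 * x0)⁻¹) * ((x0 * x0 * x0 * x0 * x0 * x0 * x0 * x0 * x0 * x0) * (wI2) * (x0 * x0 * x0 * x0 * x0 * x0 * x0 * x0 * x0 * x0)⁻¹) * ((x0 * x0 * x0 * x0 * x0 * x0) * (wI2) * (x0 * x0 * x0 * x0 * x0 * x0)⁻¹) * ((x0 * x0 * x1 * x1 * x0⁻¹ * x0⁻¹ * x0⁻¹ * x0⁻¹ * x0⁻¹ * x0⁻¹)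 * (wW4) * (x0 * x0 * x1 * x1 * x0⁻¹ * x0⁻¹ * x0⁻¹ * x0⁻¹ * x0⁻¹ * x0⁻¹)⁻¹) * ((x0 * x0 * x1⁻¹ * x1⁻¹ * x1⁻¹ * x1⁻¹) * (r2)⁻¹ * (x0 * x0 * x1⁻¹ * x1⁻¹ * x1⁻¹ * x1⁻¹)⁻¹) := by decide
  rw [h]
  exact mul_mem (mul_mem (mul_mem (mul_mem (mul_mem (nN.conj_mem _ m1 _) (nN.conj_mem _ mI2 _)) (nN.conj_mem _ mI2 _)) (nN.conj_mem _ mI2 _)) (nN.conj_mem _ mW4 _)) (nN.conj_mem _ (inv_mem m2) _)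

def wW2 : FreeGroup (Fin 3) := x0 * x0 * x0 * x0 * x0 * x0 * x1 * x0⁻¹ * x0⁻¹ * x0⁻¹ * x0⁻¹ * x0⁻¹ * x0⁻¹ * x1⁻¹

theorem mW2 : wW2 ∈ N := by
  have h : wW2 = (x0 * x0 * x0 * x0 * x0 * x0 * x1 * x0⁻¹ * x0⁻¹ * x0⁻¹ * x0⁻¹ * x0⁻¹ * x0⁻¹) * (wW4) * (x0 * x0 * x0 * x0 * x0 * x0 * x1 * x0⁻¹ * x0⁻¹ * x0⁻¹ * x0⁻¹ * x0⁻¹ * x0⁻¹)⁻¹ * (((1 : FreeGroup (Fin 3))) * (wW4)⁻¹ * ((1 : FreeGroup (Fin 3)))⁻¹) := by decide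
  rw [h]
  exact mul_mem (nN.conj_mem _ mW4 _) (nN.conj_mem _ (inv_mem mW4) _)

def wW5 : FreeGroup (Fin 3) := x1 * x0⁻¹ * x0⁻¹ * x0⁻¹ * x0⁻¹ * x0⁻¹ * x0⁻¹ * x0⁻¹ * x0⁻¹ * x0⁻¹ * x0⁻¹ * x0⁻¹ * x1⁻¹ * x0⁻¹

theorem mW5 : wW5 ∈ N := by
  have h : wW5 = (x1) * (wW3)⁻¹ * (x1)⁻¹ * ((x1) * (r1) * (x1)⁻¹) * ((x1 * x1 * x1 * x2 * x2) * (r5) * (x1 * x1 * x1 * x2 * x2)⁻¹) * ((x1 * x1 * x1 * x2⁻¹) * (wI3)⁻¹ * (x1 * x1 * x1 * x2⁻¹)⁻¹) * ((x1 * x1 * x1 * x2⁻¹) * (r4)⁻¹ * (x1 * x1 * x1 * x2⁻¹)⁻¹) * ((x1 * x1 * x1 * x2) * (r2) * (x1 * x1 * x1 * x2)⁻¹) * ((x1 * x1 * x1 * x2 * x2 * x2) * (r5) * (x1 * x1 * x1 * x2 * x2 * x2)⁻¹) := by decide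
  rw [h]
  exact mul_mem (mul_mem (mul_mem (mul_mem (mul_mem (mul_mem (nN.conj_mem _ (inv_mem mW3) _) (nN.conj_mem _ m1 _)) (nN.conj_mem _ m5 _)) (nN.conj_mem _ (inv_mem mI3) _)) (nN.conj_mem _ (inv_mem m4) _)) (nN.conj_mem _ m2 _)) (nN.conj_mem _ m5 _)

def wD : FreeGroup (Fin 3) := x2 * x0⁻¹ * x0⁻¹ * x1⁻¹ * x1⁻¹ * x0 * x0 * x0 * x1 * x1 * x1

theorem mD : wD ∈ N := by
  have h : wD = (x2 * x0⁻¹ * x0⁻¹ * x1⁻¹ * x1⁻¹) * (r5) * (x2 * x0⁻¹ * x0⁻¹ * x1⁻¹ * x1⁻¹)⁻¹ * ((x2) * (r4)⁻¹ * (x2)⁻¹) := by decide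
  rw [h]
  exact mul_mem (nN.conj_mem _ m5 _) (nN.conj_mem _ (inv_mem m4) _)
end G108

namespace G108

abbrev PG := PresentedGroup GRels
def pm : FreeGroup (Fin 3) →* PG := PresentedGroup.mk GRels

local notation "a" => pm x0
local notation "b" => pm x1
local notation "c" => pm x2

theorem eqone {w : FreeGroup (Fin 3)} (h : w ∈ N) : pm w = 1 :=
  (QuotientGroup.eq_one_iff w).mpr h

theorem e1 : a ^ 18 = 1 := by
  have h := eqone mW3
  rw [show wW3 = x0 ^ 18 from by decide] at h
  simpa only [map_pow] using h

theorem e2 : b ^ 6 = a ^ 6 := by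
  have h := eqone mW4
  rw [show wW4 = x1 ^ 6 * (x0 ^ 6)⁻¹ from by decide] at h
  simp only [map_mul, map_inv, map_pow] at h
  exact mul_inv_eq_one.mp h

theorem e3 : a ^ 6 * b = b * a ^ 6 := by
  have h := eqone mW2
  rw [show wW2 = (x0 ^ 6 * x1) * (x1 * x0 ^ 6)⁻¹ from by decide] at h
  simp only [map_mul, map_inv, map_pow] at h
  exact mul_inv_eq_one.mp h

theorem e4 : b * a = a * b * (a ^ 6) ^ 2 := by
  have h := eqone mW5
  rw [show wW5 = (x1 * x0) * (x0 * x1 * (x0 ^ 6) ^ 2)⁻¹ from by decide] at h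
  simp only [map_mul, map_inv, map_pow] at h
  exact mul_inv_eq_one.mp h

theorem hb18 : b ^ 18 = 1 := by
  rw [show (18 : ℕ) = 6 * 3 from rfl, pow_mul, e2, ← pow_mul]; exact e1

theorem hz3 : ((a : PG) ^ 6) ^ 3 = 1 := by rw [← pow_mul]; exact e1

theorem hainv : (pm x0)⁻¹ = a ^ 17 :=
  inv_eq_of_mul_eq_one_right (by rw [← pow_succ']; exact e1)

theorem hbinv : (pm x1)⁻¹ = b ^ 17 :=
  inv_eq_of_mul_eq_one_right (by rw [← pow_succ']; exact hb18)

theorem e5raw : c = (b ^ 3)⁻¹ * (a ^ 3)⁻¹ * b ^ 2 * a ^ 2 := by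
  have h := eqone mD
  rw [show wD = x2 * ((x1 ^ 3)⁻¹ * (x0 ^ 3)⁻¹ * x1 ^ 2 * x0 ^ 2)⁻¹ from by decide] at h
  simp only [map_mul, map_inv, map_pow] at h
  exact mul_inv_eq_one.mp h

theorem hbp3 : ((b : PG) ^ 3)⁻¹ = b ^ 15 :=
  inv_eq_of_mul_eq_one_right (by rw [← pow_add]; exact hb18)

theorem hap3 : ((a : PG) ^ 3)⁻¹ = a ^ 15 :=
  inv_eq_of_mul_eq_one_right (by rw [← pow_add]; exact e1)

theorem hap2 : ((a : PG) ^ 2)⁻¹ = a ^ 16 :=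
  inv_eq_of_mul_eq_one_right (by rw [← pow_add]; exact e1)

theorem hbp2 : ((b : PG) ^ 2)⁻¹ = b ^ 16 :=
  inv_eq_of_mul_eq_one_right (by rw [← pow_add]; exact hb18)

theorem e5 : c = b ^ 15 * a ^ 15 * b ^ 2 * a ^ 2 := by
  rw [e5raw, hbp3, hap3]

theorem e5inv : (pm x2)⁻¹ = a ^ 16 * b ^ 16 * a ^ 3 * b ^ 3 := by
  have h : (pm x2)⁻¹ = (a ^ 2)⁻¹ * (b ^ 2)⁻¹ * a ^ 3 * b ^ 3 := by rw [e5raw]; group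
  rw [h, hap2, hbp2]

theorem hCzb : Commute ((a : PG) ^ 6) b := e3

theorem key1 : ∀ n : ℕ, b ^ n * a = a * b ^ n * (a ^ 6) ^ (2 * n) := by
  intro n
  induction n with
  | zero => group
  | succ n ih =>
    calc b ^ (n + 1) * a = b ^ n * (b * a) := by group
      _ = b ^ n * (a * b * (a ^ 6) ^ 2) := by rw [← e4]
      _ = (b ^ n * a) * (b * (a ^ 6) ^ 2) := by group
      _ = (a * b ^ n * (a ^ 6) ^ (2 * n)) * (b * (a ^ 6) ^ 2) := by rw [ih]
      _ = a * b ^ n * ((a ^ 6) ^ (2 * n) * b) * (a ^ 6) ^ 2 := by group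
      _ = a * b ^ n * (b * (a ^ 6) ^ (2 * n)) * (a ^ 6) ^ 2 := by
          rw [(hCzb.pow_left (2 * n)).eq]
      _ = a * b ^ (n + 1) * ((a ^ 6) ^ (2 * n) * (a ^ 6) ^ 2) := by group
      _ = a * b ^ (n + 1) * (a ^ 6) ^ (2 * n + 2) := by rw [← pow_add]
      _ = a * b ^ (n + 1) * (a ^ 6) ^ (2 * (n + 1)) := by rw [show 2 * (n + 1) = 2 * n + 2 from by omega]

/-- The covering set. -/
def TT : Set PG := {x | ∃ m n p : ℕ, x = a ^ m * b ^ n * (a ^ 6) ^ p}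

theorem Tmul_a {x : PG} (hx : x ∈ TT) : x * a ∈ TT := by
  obtain ⟨m, n, p, rfl⟩ := hx
  refine ⟨m + 1, n, 2 * n + p, ?_⟩
  calc a ^ m * b ^ n * (a ^ 6) ^ p * a
      = a ^ m * (b ^ n * a) * (a ^ 6) ^ p := by
        rw [mul_assoc (a ^ m * b ^ n), (((Commute.refl a).pow_left 6).pow_left p).eq]; group
    _ = a ^ m * (a * b ^ n * (a ^ 6) ^ (2 * n)) * (a ^ 6) ^ p := by rw [key1]
    _ = a ^ (m + 1) * b ^ n * (a ^ 6) ^ (2 * n + p) := by rw [pow_add, pow_add]; group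

theorem Tmul_b {x : PG} (hx : x ∈ TT) : x * b ∈ TT := by
  obtain ⟨m, n, p, rfl⟩ := hx
  refine ⟨m, n + 1, p, ?_⟩
  calc a ^ m * b ^ n * (a ^ 6) ^ p * b
      = a ^ m * b ^ n * ((a ^ 6) ^ p * b) := by group
    _ = a ^ m * b ^ n * (b * (a ^ 6) ^ p) := by rw [(hCzb.pow_left p).eq]
    _ = a ^ m * b ^ (n + 1) * (a ^ 6) ^ p := by group

theorem Tmul_apow {x : PG} (hx : x ∈ TT) : ∀ k : ℕ, x * a ^ k ∈ TT := by
  intro k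
  induction k with
  | zero => simpa using hx
  | succ k ih =>
    have h := Tmul_a ih
    rwa [mul_assoc, ← pow_succ] at h

theorem Tmul_bpow {x : PG} (hx : x ∈ TT) : ∀ k : ℕ, x * b ^ k ∈ TT := by
  intro k
  induction k with
  | zero => simpa using hx
  | succ k ih =>
    have h := Tmul_b ih
    rwa [mul_assoc, ← pow_succ] at h

theorem Tmul {x y : PG} (hx : x ∈ TT) (hy : y ∈ TT) : x * y ∈ TT := by
  obtain ⟨m, n, p, rfl⟩ := hy
  have h2 := Tmul_bpow (Tmul_apow hx m) n
  have h3 := Tmul_apow h2 (6 * p)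
  rwa [show x * a ^ m * b ^ n * a ^ (6 * p) = x * (a ^ m * b ^ n * (a ^ 6) ^ p) by
    rw [pow_mul]; group] at h3

theorem Tsurj : ∀ x : PG, x ∈ TT := by
  intro x
  induction x using PresentedGroup.induction_on with
  | H w =>
    show pm w ∈ TT
    induction w using FreeGroup.induction_on with
    | C1 => exact ⟨0, 0, 0, by simp⟩
    | of i =>
      fin_cases i
      · exact ⟨1, 0, 0, by show pm x0 = _; simp⟩
      · exact ⟨0, 1, 0, by show pm x1 = _; simp⟩
      · show c ∈ TT
        rw [e5]
        exact Tmul_apow (Tmul_bpow (Tmul_apow ⟨0, 15, 0, by simp⟩ 15) 2) 2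
    | inv_of i _ =>
      rw [map_inv]
      fin_cases i
      · show (pm x0)⁻¹ ∈ TT
        rw [hainv]; exact ⟨17, 0, 0, by simp⟩
      · show (pm x1)⁻¹ ∈ TT
        rw [hbinv]; exact ⟨0, 17, 0, by simp⟩
      · show (pm x2)⁻¹ ∈ TT
        rw [e5inv]
        exact Tmul_bpow (Tmul_apow (Tmul_bpow ⟨16, 0, 0, by simp⟩ 16) 3) 3
    | mul x y hx hy =>
      rw [map_mul]
      exact Tmul hx hy

end G108

namespace G108

abbrev P9 := Equiv.Perm (ZMod 9)

def xp : P9 := ⟨fun s => s + 1, fun s => s - 1, by decide, by decide⟩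
def yp : P9 := ⟨fun s => 4 * s + 1, fun s => 7 * s + 2, by decide, by decide⟩

abbrev K : Type := Multiplicative (ZMod 2 × ZMod 2) × P9

def Ak : K := (Multiplicative.ofAdd (1, 0), xp)
def Bk : K := (Multiplicative.ofAdd (0, 1), yp)
def Ck : K := (Multiplicative.ofAdd (1, 1), (xp * yp)⁻¹)

def fK : Fin 3 → K := ![Ak, Bk, Ck]

theorem hK : ∀ r ∈ GRels, FreeGroup.lift fK r = 1 := by
  intro r hr
  simp only [GRels, Set.mem_insert_iff, Set.mem_singleton_iff] at hr
  rcases hr with rfl | rfl | rfl | rfl | rfl <;> decide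

def φK : PG →* K := PresentedGroup.toGroup hK

theorem hphiA : φK (pm x0) = Ak := PresentedGroup.toGroup.of hK
theorem hphiB : φK (pm x1) = Bk := PresentedGroup.toGroup.of hK

def fm : ZMod 6 × ZMod 6 × ZMod 3 → PG := fun t =>
  pm x0 ^ t.1.val * pm x1 ^ t.2.1.val * (pm x0 ^ 6) ^ t.2.2.val

def gK : ZMod 6 × ZMod 6 × ZMod 3 → K := fun t =>
  Ak ^ t.1.val * Bk ^ t.2.1.val * (Ak ^ 6) ^ t.2.2.val

set_option maxRecDepth 40000 in
theorem gK_inj : Function.Injective gK := by decide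

theorem phi_fm : ∀ t, φK (fm t) = gK t := by
  intro t
  simp only [fm, gK, map_mul, map_pow, hphiA, hphiB]

theorem fm_inj : Function.Injective fm := fun s t h => gK_inj (by rw [← phi_fm, ← phi_fm, h])

local notation "a" => pm x0
local notation "b" => pm x1

theorem pow_a (m : ℕ) : (a : PG) ^ m = a ^ (m % 6) * (a ^ 6) ^ (m / 6) := by
  conv_lhs => rw [← Nat.mod_add_div m 6]
  rw [pow_add, pow_mul]

theorem pow_b (n : ℕ) : (b : PG) ^ n = b ^ (n % 6) * (a ^ 6) ^ (n / 6) := by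
  conv_lhs => rw [← Nat.mod_add_div n 6]
  rw [pow_add, pow_mul, e2]

theorem pow_z (p : ℕ) : ((a : PG) ^ 6) ^ p = (a ^ 6) ^ (p % 3) := by
  conv_lhs => rw [← Nat.mod_add_div p 3]
  rw [pow_add, pow_mul, hz3, one_pow, mul_one]

theorem fm_surj : Function.Surjective fm := by
  intro x
  obtain ⟨m, n, p, rfl⟩ := Tsurj x
  refine ⟨((m : ZMod 6), (n : ZMod 6), ((m / 6 + n / 6 + p : ℕ) : ZMod 3)), ?_⟩
  show a ^ (_ : ZMod 6).val * b ^ (_ : ZMod 6).val * (a ^ 6) ^ (_ : ZMod 3).val = _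
  rw [ZMod.val_natCast, ZMod.val_natCast, ZMod.val_natCast, ← pow_z, pow_a m, pow_b n]
  rw [pow_add, pow_add]
  calc a ^ (m % 6) * b ^ (n % 6) * ((a ^ 6) ^ (m / 6) * (a ^ 6) ^ (n / 6) * (a ^ 6) ^ p)
      = a ^ (m % 6) * ((a ^ 6) ^ (m / 6) * b ^ (n % 6)) * (a ^ 6) ^ (n / 6) * (a ^ 6) ^ p := by
        rw [((hCzb.pow_left (m / 6)).pow_right (n % 6)).eq]; group
    _ = a ^ (m % 6) * (a ^ 6) ^ (m / 6) * (b ^ (n % 6) * (a ^ 6) ^ (n / 6)) * (a ^ 6) ^ p := by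
        group

end G108

/-- The presented group `G` is finite of order 108. -/
theorem presentedGroup_card_eq_108 :
    Finite (PresentedGroup GRels) ∧ Nat.card (PresentedGroup GRels) = 108 := by
  have hbij : Function.Bijective G108.fm := ⟨G108.fm_inj, G108.fm_surj⟩
  constructor
  · exact Finite.of_surjective G108.fm hbij.2
  · have h := Nat.card_congr (Equiv.ofBijective G108.fm hbij)
    rw [← h, Nat.card_prod, Nat.card_prod, Nat.card_zmod, Nat.card_zmod]
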